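/- arXiv:2106.12095 — 4 statements merged into one kernel-verified Lean document; each statement's English description precedes it below -/
import Mathlib

section
/- Let ℓ be a prime number. The Haar probability measure μ on ℤ_ℓ × ℤ_ℓ of the set {(a,b) ∈ ℤ_ℓ × ℤ_ℓ : 4a³ + 27b² is a unit of ℤ_ℓ} equals 1 − ℓ^{-1}. -/
open MeasureTheory
open scoped ENNReal

noncomputable instance padicIntMeasurableSpace (ℓ : ℕ) [Fact ℓ.Prime] :
    MeasurableSpace ℤ_[ℓ] := borel _

instance padicIntBorelSpace (ℓ : ℕ) [Fact ℓ.Prime] : BorelSpace ℤ_[ℓ] := ⟨rfl⟩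

namespace Stmt3Aux

variable {ℓ : ℕ} [Fact ℓ.Prime]

/-- reduction mod ℓ of a point of `ℤ_ℓ × ℤ_ℓ`. -/
noncomputable def red (w : ℤ_[ℓ] × ℤ_[ℓ]) : ZMod ℓ × ZMod ℓ :=
  (PadicInt.toZMod w.1, PadicInt.toZMod w.2)

/-- The fiber of `red` over `v`. -/
def C (v : ZMod ℓ × ZMod ℓ) : Set (ℤ_[ℓ] × ℤ_[ℓ]) := red ⁻¹' {v}

lemma toZMod_eq_iff (c : ZMod ℓ) (x : ℤ_[ℓ]) :
    PadicInt.toZMod x = c ↔ ‖x - ((c.val : ℕ) : ℤ_[ℓ])‖ < 1 := by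
  have h0 : PadicInt.toZMod (((c.val : ℕ) : ℤ_[ℓ])) = c := by
    rw [map_natCast]; exact ZMod.natCast_zmod_val c
  rw [← sub_eq_zero]
  have h1 : PadicInt.toZMod x - c = PadicInt.toZMod (x - ((c.val : ℕ) : ℤ_[ℓ])) := by
    rw [map_sub, h0]
  rw [h1, ← RingHom.mem_ker, PadicInt.ker_toZMod, IsLocalRing.mem_maximalIdeal,
    PadicInt.mem_nonunits]

lemma isOpen_toZMod_fiber (c : ZMod ℓ) :
    IsOpen {x : ℤ_[ℓ] | PadicInt.toZMod x = c} := by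
  have : {x : ℤ_[ℓ] | PadicInt.toZMod x = c}
      = {x : ℤ_[ℓ] | ‖x - ((c.val : ℕ) : ℤ_[ℓ])‖ < 1} := by
    ext x; exact toZMod_eq_iff c x
  rw [this]
  exact isOpen_lt (by fun_prop) continuous_const

lemma isOpen_C (v : ZMod ℓ × ZMod ℓ) : IsOpen (C v) := by
  have : C v = (Prod.fst ⁻¹' {x : ℤ_[ℓ] | PadicInt.toZMod x = v.1}) ∩
      (Prod.snd ⁻¹' {x : ℤ_[ℓ] | PadicInt.toZMod x = v.2}) := by
    ext w
    simp [C, red, Set.mem_preimage, Prod.ext_iff]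
  rw [this]
  exact ((isOpen_toZMod_fiber v.1).preimage continuous_fst).inter
    ((isOpen_toZMod_fiber v.2).preimage continuous_snd)

lemma measurableSet_C (v : ZMod ℓ × ZMod ℓ) : MeasurableSet (C v) :=
  (isOpen_C v).measurableSet

lemma red_add (w w' : ℤ_[ℓ] × ℤ_[ℓ]) : red (w + w') = red w + red w' := by
  simp [red, Prod.ext_iff, map_add]

lemma pairwise_disjoint_C :
    Pairwise (Function.onFun Disjoint (C (ℓ := ℓ))) := by
  intro v v' hvv'
  simp only [Function.onFun, C, Set.disjoint_left]
  intro w hw hw'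
  exact hvv' (hw.symm.trans hw')

/-- every fiber of `red` has the same measure as the fiber over 0. -/
lemma measure_C_eq (μ : Measure (ℤ_[ℓ] × ℤ_[ℓ])) [μ.IsAddLeftInvariant]
    (v : ZMod ℓ × ZMod ℓ) : μ (C v) = μ (C 0) := by
  classical
  set c : ℤ_[ℓ] × ℤ_[ℓ] := ((((-v.1).val : ℕ) : ℤ_[ℓ]), (((-v.2).val : ℕ) : ℤ_[ℓ])) with hc
  have hredc : red c = -v := by
    simp only [red, hc, map_natCast]
    rw [ZMod.natCast_zmod_val, ZMod.natCast_zmod_val]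
    rfl
  have key : C v = (fun w => c + w) ⁻¹' (C 0) := by
    ext w
    simp only [C, Set.mem_preimage, Set.mem_singleton_iff, red_add, hredc]
    constructor
    · intro h; rw [h]; simp
    · intro h
      have := congrArg (fun z => v + z) h
      simpa [add_comm, ← add_assoc] using this
  rw [key, measure_preimage_add]

lemma measure_C_zero (μ : Measure (ℤ_[ℓ] × ℤ_[ℓ])) [IsProbabilityMeasure μ]
    [μ.IsAddLeftInvariant] :
    μ (C (0 : ZMod ℓ × ZMod ℓ)) = ((ℓ : ℝ≥0∞) * ℓ)⁻¹ := by
  classical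
  have hunion : (⋃ v : ZMod ℓ × ZMod ℓ, C v) = Set.univ := by
    ext w
    simp only [Set.mem_iUnion, Set.mem_univ, iff_true]
    exact ⟨red w, rfl⟩
  have h1 : (1 : ℝ≥0∞) = ∑ v : ZMod ℓ × ZMod ℓ, μ (C v) := by
    rw [← measure_univ (μ := μ), ← hunion,
      measure_iUnion pairwise_disjoint_C measurableSet_C, tsum_fintype]
  have h2 : (1 : ℝ≥0∞) = (Fintype.card (ZMod ℓ × ZMod ℓ) : ℝ≥0∞) * μ (C 0) := by
    rw [h1]
    rw [Finset.sum_congr rfl (fun v _ => measure_C_eq μ v), Finset.sum_const]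
    simp [mul_comm]
  have hcard : (Fintype.card (ZMod ℓ × ZMod ℓ) : ℝ≥0∞) = (ℓ : ℝ≥0∞) * ℓ := by
    rw [Fintype.card_prod, ZMod.card]
    push_cast
    ring
  rw [hcard] at h2
  have hl0 : (ℓ : ℝ≥0∞) ≠ 0 := by
    exact_mod_cast Nat.cast_ne_zero.mpr (Fact.out : ℓ.Prime).ne_zero
  have hltop : (ℓ : ℝ≥0∞) ≠ ⊤ := ENNReal.natCast_ne_top ℓ
  have hll0 : (ℓ : ℝ≥0∞) * ℓ ≠ 0 := mul_ne_zero hl0 hl0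
  have hlltop : (ℓ : ℝ≥0∞) * ℓ ≠ ⊤ := ENNReal.mul_ne_top hltop hltop
  calc μ (C 0) = ((ℓ : ℝ≥0∞) * ℓ)⁻¹ * (((ℓ : ℝ≥0∞) * ℓ) * μ (C 0)) := by
        rw [← mul_assoc, ENNReal.inv_mul_cancel hll0 hlltop, one_mul]
    _ = ((ℓ : ℝ≥0∞) * ℓ)⁻¹ := by rw [← h2, mul_one]

lemma card_cusp_two :
    (Finset.univ.filter fun v : ZMod 2 × ZMod 2 => 4 * v.1 ^ 3 + 27 * v.2 ^ 2 = 0).card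
      = 2 := by decide

lemma card_cusp_three :
    (Finset.univ.filter fun v : ZMod 3 × ZMod 3 => 4 * v.1 ^ 3 + 27 * v.2 ^ 2 = 0).card
      = 3 := by decide

/-- the number of `(a,b)` mod ℓ with `4a³+27b² = 0` is exactly ℓ. -/
lemma card_cusp :
    (Finset.univ.filter fun v : ZMod ℓ × ZMod ℓ => 4 * v.1 ^ 3 + 27 * v.2 ^ 2 = 0).card
      = ℓ := by
  classical
  have hp : ℓ.Prime := Fact.out
  by_cases h2 : ℓ = 2
  · subst h2; exact card_cusp_two
  by_cases h3 : ℓ = 3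
  · subst h3; exact card_cusp_three
  -- now 2 and 3 are invertible mod ℓ
  have h2' : (2 : ZMod ℓ) ≠ 0 := by
    intro h
    have : ℓ ∣ 2 := by
      rwa [← Nat.cast_ofNat, ZMod.natCast_eq_zero_iff] at h
    exact h2 ((Nat.prime_dvd_prime_iff_eq hp Nat.prime_two).mp this)
  have h3' : (3 : ZMod ℓ) ≠ 0 := by
    intro h
    have : ℓ ∣ 3 := by
      rwa [← Nat.cast_ofNat, ZMod.natCast_eq_zero_iff] at h
    exact h3 ((Nat.prime_dvd_prime_iff_eq hp Nat.prime_three).mp this)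
  have hb := Finset.card_bij
    (s := (Finset.univ : Finset (ZMod ℓ)))
    (t := Finset.univ.filter fun v : ZMod ℓ × ZMod ℓ => 4 * v.1 ^ 3 + 27 * v.2 ^ 2 = 0)
    (fun (t : ZMod ℓ) _ => ((-3 * t ^ 2, 2 * t ^ 3) : ZMod ℓ × ZMod ℓ)) ?_ ?_ ?_
  · rw [Finset.card_univ, ZMod.card] at hb
    exact hb.symm
  · intro t _
    simp only [Finset.mem_filter, Finset.mem_univ, true_and]
    ring
  · intro t _ s _ h
    rw [Prod.ext_iff] at h
    obtain ⟨ha, hb⟩ := h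
    have ht2 : t ^ 2 = s ^ 2 := by
      have hm3 : (-3 : ZMod ℓ) ≠ 0 := neg_ne_zero.mpr h3'
      exact mul_left_cancel₀ hm3 ha
    have ht3 : t ^ 3 = s ^ 3 := mul_left_cancel₀ h2' hb
    by_cases ht : t = 0
    · subst ht
      have : s ^ 2 = 0 := by simpa using ht2.symm
      have := pow_eq_zero_iff (n := 2) (by norm_num) |>.mp this
      simp [this]
    · have ht2ne : t ^ 2 ≠ 0 := pow_ne_zero 2 ht
      have : t * t ^ 2 = s * t ^ 2 := by
        calc t * t ^ 2 = t ^ 3 := by ring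
          _ = s ^ 3 := ht3
          _ = s * s ^ 2 := by ring
          _ = s * t ^ 2 := by rw [ht2]
      exact mul_right_cancel₀ ht2ne this
  · rintro ⟨a, b⟩ hab
    simp only [Finset.mem_filter, Finset.mem_univ, true_and] at hab
    by_cases haz : a = 0
    · refine ⟨0, Finset.mem_univ _, ?_⟩
      subst haz
      have : b ^ 2 = 0 := by
        have h27 : (27 : ZMod ℓ) ≠ 0 := by
          intro h; apply h3'
          have : (27 : ZMod ℓ) = 3 ^ 3 := by norm_num
          rw [this] at h
          exact pow_eq_zero_iff (by norm_num) |>.mp h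
        have : (27 : ZMod ℓ) * b ^ 2 = 0 := by linear_combination hab
        exact (mul_eq_zero.mp this).resolve_left h27
      have hb : b = 0 := pow_eq_zero_iff (n := 2) (by norm_num) |>.mp this
      simp [hb]
    · refine ⟨-3 * b / (2 * a), Finset.mem_univ _, ?_⟩
      have h2a : (2 : ZMod ℓ) * a ≠ 0 := mul_ne_zero h2' haz
      have key : 4 * a ^ 3 = -(27 * b ^ 2) := by linear_combination hab
      refine Prod.ext ?_ ?_
      · field_simp
        linear_combination -hab
      · field_simp
        linear_combination (-b) * hab

end Stmt3Aux

/-- The Haar probability measure of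
`{(a,b) ∈ ℤ_ℓ × ℤ_ℓ : 4a³ + 27b² is a unit}` equals `1 - ℓ⁻¹`. -/
theorem stmt3 (ℓ : ℕ) [Fact ℓ.Prime]
    (μ : Measure (ℤ_[ℓ] × ℤ_[ℓ])) [IsProbabilityMeasure μ] [μ.IsAddLeftInvariant] :
    μ {w : ℤ_[ℓ] × ℤ_[ℓ] | IsUnit (4 * w.1 ^ 3 + 27 * w.2 ^ 2)} =
      1 - (ℓ : ℝ≥0∞)⁻¹ := by
  classical
  open Stmt3Aux in
  set Z : Finset (ZMod ℓ × ZMod ℓ) :=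
    Finset.univ.filter (fun v : ZMod ℓ × ZMod ℓ => 4 * v.1 ^ 3 + 27 * v.2 ^ 2 = 0) with hZ
  set T : Set (ℤ_[ℓ] × ℤ_[ℓ]) :=
    {w : ℤ_[ℓ] × ℤ_[ℓ] | ¬ IsUnit (4 * w.1 ^ 3 + 27 * w.2 ^ 2)} with hT
  have hTunion : T = ⋃ v ∈ Z, C v := by
    ext w
    simp only [hT, Set.mem_setOf_eq, Set.mem_iUnion, C, Set.mem_preimage,
      Set.mem_singleton_iff]
    have hiff : ¬ IsUnit (4 * w.1 ^ 3 + 27 * w.2 ^ 2) ↔ red w ∈ Z := by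
      rw [PadicInt.not_isUnit_iff]
      have : (‖4 * w.1 ^ 3 + 27 * w.2 ^ 2‖ < 1) ↔
          PadicInt.toZMod (4 * w.1 ^ 3 + 27 * w.2 ^ 2) = 0 := by
        rw [← RingHom.mem_ker, PadicInt.ker_toZMod, IsLocalRing.mem_maximalIdeal,
          PadicInt.mem_nonunits]
      rw [this, hZ]
      simp only [Finset.mem_filter, Finset.mem_univ, true_and, red]
      push_cast [map_add, map_mul, map_pow, map_ofNat]
      rfl
    rw [hiff]
    constructor
    · intro h; exact ⟨red w, h, rfl⟩
    · rintro ⟨v, hv, rfl⟩; exact hv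
  have hTmeas : MeasurableSet T := by
    rw [hTunion]
    exact MeasurableSet.biUnion Z.countable_toSet (fun v _ => measurableSet_C v)
  have hμT : μ T = (ℓ : ℝ≥0∞)⁻¹ := by
    rw [hTunion, measure_biUnion_finset
      (pairwise_disjoint_C.set_pairwise _) (fun v _ => measurableSet_C v)]
    rw [Finset.sum_congr rfl (fun v _ => (measure_C_eq μ v).trans (measure_C_zero μ)),
      Finset.sum_const, card_cusp, nsmul_eq_mul]
    have hl0 : (ℓ : ℝ≥0∞) ≠ 0 := by
      exact_mod_cast Nat.cast_ne_zero.mpr (Fact.out : ℓ.Prime).ne_zero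
    have hltop : (ℓ : ℝ≥0∞) ≠ ⊤ := ENNReal.natCast_ne_top ℓ
    rw [ENNReal.mul_inv (Or.inl hl0) (Or.inl hltop), ← mul_assoc,
      ENNReal.mul_inv_cancel hl0 hltop, one_mul]
  have hS : {w : ℤ_[ℓ] × ℤ_[ℓ] | IsUnit (4 * w.1 ^ 3 + 27 * w.2 ^ 2)} = Tᶜ := by
    ext w; simp [hT]
  rw [hS, prob_compl_eq_one_sub hTmeas, hμT]
end

section
/- Let ℓ ≥ 5 be a prime number and m ≥ 1 an integer. The number of pairs (a,b) ∈ (ℤ/ℓ^m ℤ) × (ℤ/ℓ^m ℤ) such that 4a³ + 27b² = 0 in ℤ/ℓ^m ℤ and the reduction of (a,b) modulo ℓ is not (0,0) equals ℓ^{m−1}(ℓ−1). -/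
/-- For a prime `ℓ ≥ 5` and `m ≥ 1`, the number of pairs `(a,b) ∈ (ℤ/ℓᵐℤ)²` with
`4a³ + 27b² = 0` whose reduction mod `ℓ` is not `(0,0)` equals `ℓ^{m-1}(ℓ-1)`. -/
theorem stmt4 (ℓ m : ℕ) (hℓ : ℓ.Prime) (h5 : 5 ≤ ℓ) (hm : 1 ≤ m) :
    Nat.card {w : ZMod (ℓ ^ m) × ZMod (ℓ ^ m) //
        4 * w.1 ^ 3 + 27 * w.2 ^ 2 = 0 ∧
        ¬ (ZMod.castHom (dvd_pow_self ℓ (Nat.one_le_iff_ne_zero.mp hm)) (ZMod ℓ) w.1 = 0 ∧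
           ZMod.castHom (dvd_pow_self ℓ (Nat.one_le_iff_ne_zero.mp hm)) (ZMod ℓ) w.2 = 0)} =
      ℓ ^ (m - 1) * (ℓ - 1) := by
  haveI : Fact ℓ.Prime := ⟨hℓ⟩
  haveI : NeZero (ℓ ^ m) := ⟨pow_ne_zero m hℓ.ne_zero⟩
  set N := ℓ ^ m
  set π := ZMod.castHom (dvd_pow_self ℓ (Nat.one_le_iff_ne_zero.mp hm)) (ZMod ℓ)
  -- small numbers nonzero mod ℓ
  have hnd : ∀ k : ℕ, 0 < k → k < ℓ → (k : ZMod ℓ) ≠ 0 := by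
    intro k hk0 hkℓ h
    rw [ZMod.natCast_eq_zero_iff] at h
    exact absurd (Nat.le_of_dvd hk0 h) (not_le.mpr hkℓ)
  have h2 : (2 : ZMod ℓ) ≠ 0 := by have := hnd 2 (by norm_num) (by omega); simpa using this
  have h3 : (3 : ZMod ℓ) ≠ 0 := by have := hnd 3 (by norm_num) (by omega); simpa using this
  have h4 : (4 : ZMod ℓ) ≠ 0 := by
    intro h; apply h2
    have : ((2:ZMod ℓ))^2 = 0 := by rw [show ((2:ZMod ℓ))^2 = 4 by norm_num, h]
    exact pow_eq_zero_iff (by norm_num) |>.mp this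
  have h27 : (27 : ZMod ℓ) ≠ 0 := by
    intro h; apply h3
    have : ((3:ZMod ℓ))^3 = 0 := by rw [show ((3:ZMod ℓ))^3 = 27 by norm_num, h]
    exact pow_eq_zero_iff (by norm_num) |>.mp this
  -- unit criterion
  have hunit : ∀ x : ZMod N, π x ≠ 0 → IsUnit x := by
    intro x hx
    rw [← ZMod.natCast_zmod_val x, ZMod.isUnit_iff_coprime]
    have : ¬ ℓ ∣ x.val := by
      intro hdvd
      apply hx
      rw [ZMod.castHom_apply, ← ZMod.natCast_val, ZMod.natCast_eq_zero_iff]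
      exact hdvd
    exact Nat.Coprime.pow_right m ((Nat.Prime.coprime_iff_not_dvd hℓ).mpr this).symm
  have hπ : ∀ x : ZMod N, IsUnit x → π x ≠ 0 := by
    intro x hx
    exact (hx.map π).ne_zero
  -- the bijection
  let f : (ZMod N)ˣ → {w : ZMod N × ZMod N //
      4 * w.1 ^ 3 + 27 * w.2 ^ 2 = 0 ∧ ¬ (π w.1 = 0 ∧ π w.2 = 0)} := fun u =>
    ⟨(-3 * (u:ZMod N)^2, 2 * (u:ZMod N)^3), by ring, by
      rintro ⟨ha, -⟩
      have : π (-3 * (u:ZMod N)^2) ≠ 0 := by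
        rw [map_mul, map_pow]
        apply mul_ne_zero
        · rw [map_neg, map_ofNat]; exact neg_ne_zero.mpr h3
        · exact pow_ne_zero 2 (hπ _ u.isUnit)
      exact this ha⟩
  have hbij : Function.Bijective f := by
    constructor
    · intro u v huv
      have h1 : -3 * (u:ZMod N)^2 = -3 * (v:ZMod N)^2 := congrArg (Prod.fst ∘ Subtype.val) huv
      have h2' : 2 * (u:ZMod N)^3 = 2 * (v:ZMod N)^3 := congrArg (Prod.snd ∘ Subtype.val) huv
      have u3 : IsUnit (3 : ZMod N) := hunit 3 (by rw [map_ofNat]; exact h3)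
      have u2 : IsUnit (2 : ZMod N) := hunit 2 (by rw [map_ofNat]; exact h2)
      have hsq : (u:ZMod N)^2 = (v:ZMod N)^2 := by
        have := u3.neg.mul_left_cancel (by simpa [neg_mul] using h1)
        exact this
      have hcb : (u:ZMod N)^3 = (v:ZMod N)^3 := u2.mul_left_cancel h2'
      have : (u:ZMod N)^2 * (u:ZMod N) = (u:ZMod N)^2 * (v:ZMod N) := by
        calc (u:ZMod N)^2 * (u:ZMod N) = (u:ZMod N)^3 := by ring
        _ = (v:ZMod N)^3 := hcb
        _ = (v:ZMod N)^2 * (v:ZMod N) := by ring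
        _ = (u:ZMod N)^2 * (v:ZMod N) := by rw [hsq]
      exact Units.ext ((u.isUnit.pow 2).mul_left_cancel this)
    · rintro ⟨⟨a, b⟩, heq, hne⟩
      have hb : π b ≠ 0 := by
        intro hb0
        apply hne
        have : 4 * (π a)^3 + 27 * (π b)^2 = 0 := by
          have := congrArg π heq
          simpa [map_add, map_mul, map_pow, map_ofNat] using this
        rw [hb0] at this
        have h' : (4 : ZMod ℓ) * (π a)^3 = 0 := by linear_combination this
        have ha0 : (π a)^3 = 0 := by
          rcases mul_eq_zero.mp h' with h | h
          · exact absurd h h4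
          · exact h
        exact ⟨pow_eq_zero_iff (by norm_num) |>.mp ha0, hb0⟩
      have ha : π a ≠ 0 := by
        intro ha0
        apply hb
        have : 4 * (π a)^3 + 27 * (π b)^2 = 0 := by
          have := congrArg π heq
          simpa [map_add, map_mul, map_pow, map_ofNat] using this
        rw [ha0] at this
        have h' : (27 : ZMod ℓ) * (π b)^2 = 0 := by linear_combination this
        have hb0 : (π b)^2 = 0 := by
          rcases mul_eq_zero.mp h' with h | h
          · exact absurd h h27
          · exact h
        exact pow_eq_zero_iff (by norm_num) |>.mp hb0
      have hua : IsUnit a := hunit a ha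
      have hub : IsUnit b := hunit b hb
      have hu2a : IsUnit (2 * a) := (hunit 2 (by rw [map_ofNat]; exact h2)).mul hua
      obtain ⟨c, hc⟩ := hu2a.exists_right_inv
      have hu3 : IsUnit (-3 : ZMod N) := (hunit 3 (by rw [map_ofNat]; exact h3)).neg
      have huc : IsUnit c := IsUnit.of_mul_eq_one (2 * a) (by linear_combination hc)
      have hut : IsUnit (-3 * b * c) := (hu3.mul hub).mul huc
      refine ⟨hut.unit, ?_⟩
      apply Subtype.ext
      have e1 : -3 * (-3 * b * c)^2 = a := by
        linear_combination (-(c^2)) * heq + (a * ((2*a)*c + 1)) * hc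
      have e2 : 2 * (-3 * b * c)^3 = b := by
        linear_combination (-2*b*c^3) * heq + (b * ((2*a*c)^2 + 2*a*c + 1)) * hc
      show ((-3 * (_:ZMod N)^2, 2 * (_:ZMod N)^3) : ZMod N × ZMod N) = (a, b)
      rw [hut.unit_spec]
      exact Prod.ext e1 e2
  rw [Nat.card_congr (Equiv.ofBijective f hbij).symm, Nat.card_eq_fintype_card,
    ZMod.card_units_eq_totient, Nat.totient_prime_pow hℓ hm]
end

section
/- Let ℓ ≥ 5 be a prime number and n ≥ 1 an integer. The Haar probability measure μ on ℤ_ℓ × ℤ_ℓ of the set {(a,b) ∈ ℤ_ℓ × ℤ_ℓ : (a,b) is not congruent to (0,0) modulo ℓ, and v(4a³ + 27b²) ≥ n} equals (ℓ−1)/ℓ^{n+1}. -/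
open MeasureTheory
open scoped ENNReal

section Aux

variable {ℓ n : ℕ} [Fact ℓ.Prime]

lemma aux_dvd_iff_pi (hn : 1 ≤ n) (z : ZMod (ℓ^n)) :
    (ℓ : ZMod (ℓ^n)) ∣ z ↔
      (ZMod.castHom (dvd_pow_self ℓ (Nat.one_le_iff_ne_zero.mp hn)) (ZMod ℓ)) z = 0 := by
  haveI : NeZero (ℓ^n) := ⟨pow_ne_zero _ (Fact.out : ℓ.Prime).ne_zero⟩
  constructor
  · rintro ⟨c, rfl⟩
    simp [map_mul, map_natCast, ZMod.natCast_self]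
  · intro h
    rw [ZMod.castHom_apply, ← ZMod.natCast_val, ZMod.natCast_eq_zero_iff] at h
    obtain ⟨k, hk⟩ := h
    exact ⟨(k : ZMod (ℓ^n)), by rw [← ZMod.natCast_zmod_val z, hk]; push_cast; ring⟩

lemma aux_isUnit_iff_not_dvd (hn : 1 ≤ n) (h5 : 5 ≤ ℓ) (z : ZMod (ℓ^n)) :
    IsUnit z ↔ ¬ (ℓ : ZMod (ℓ^n)) ∣ z := by
  haveI : NeZero (ℓ^n) := ⟨pow_ne_zero _ (Fact.out : ℓ.Prime).ne_zero⟩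
  have hp : ℓ.Prime := Fact.out
  haveI : Fact (1 < ℓ) := ⟨by omega⟩
  constructor
  · intro hu hd
    rw [aux_dvd_iff_pi hn] at hd
    exact (hu.map (ZMod.castHom (dvd_pow_self ℓ (Nat.one_le_iff_ne_zero.mp hn))
      (ZMod ℓ))).ne_zero hd
  · intro hd
    have hv : ¬ ℓ ∣ z.val := by
      intro hv
      apply hd
      obtain ⟨k, hk⟩ := hv
      exact ⟨(k : ZMod (ℓ^n)), by rw [← ZMod.natCast_zmod_val z, hk]; push_cast; ring⟩
    have hc : z.val.Coprime (ℓ^n) := ((hp.coprime_iff_not_dvd.mpr hv).symm.pow_right n)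
    have := (ZMod.isUnit_iff_coprime z.val (ℓ^n)).mpr hc
    rwa [ZMod.natCast_zmod_val z] at this

lemma aux_count (hn : 1 ≤ n) (h5 : 5 ≤ ℓ) :
    Nat.card {p : ZMod (ℓ^n) × ZMod (ℓ^n) |
      ¬ ((ℓ : ZMod (ℓ^n)) ∣ p.1 ∧ (ℓ : ZMod (ℓ^n)) ∣ p.2) ∧
      4 * p.1 ^ 3 + 27 * p.2 ^ 2 = 0} = (ℓ - 1) * ℓ ^ (n - 1) := by
  haveI : NeZero (ℓ^n) := ⟨pow_ne_zero _ (Fact.out : ℓ.Prime).ne_zero⟩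
  have hp : ℓ.Prime := Fact.out
  haveI : Fact (1 < ℓ) := ⟨by omega⟩
  set Z := ZMod (ℓ^n)
  set π := ZMod.castHom (dvd_pow_self ℓ (Nat.one_le_iff_ne_zero.mp hn)) (ZMod ℓ) with hπ
  have h2 : IsUnit (2 : Z) := by
    have : IsUnit ((2 : ℕ) : Z) := (ZMod.isUnit_iff_coprime 2 (ℓ^n)).mpr
      (((Nat.coprime_primes Nat.prime_two hp).mpr (by omega)).pow_right n)
    simpa using this
  have h3 : IsUnit (3 : Z) := by
    have : IsUnit ((3 : ℕ) : Z) := (ZMod.isUnit_iff_coprime 3 (ℓ^n)).mpr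
      (((Nat.coprime_primes Nat.prime_three hp).mpr (by omega)).pow_right n)
    simpa using this
  set g : Zˣ → Z × Z := fun t => (-3 * (t : Z)^2, 2 * (t : Z)^3) with hg
  have hinj : Function.Injective g := by
    intro t s h
    rw [Prod.ext_iff] at h
    have e2 : (t : Z)^2 = (s : Z)^2 := (h3.neg).mul_left_cancel (by simpa only [hg] using h.1)
    have e3 : (t : Z)^3 = (s : Z)^3 := h2.mul_left_cancel h.2
    have : (t : Z) * (t : Z)^2 = (s : Z) * (t : Z)^2 := by
      calc (t : Z) * (t : Z)^2 = (t : Z)^3 := by ring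
        _ = (s : Z)^3 := e3
        _ = (s : Z) * (s : Z)^2 := by ring
        _ = (s : Z) * (t : Z)^2 := by rw [e2]
    exact Units.ext ((t.isUnit.pow 2).mul_right_cancel this)
  have hrange : Set.range g = {p : Z × Z |
      ¬ ((ℓ : Z) ∣ p.1 ∧ (ℓ : Z) ∣ p.2) ∧ 4 * p.1 ^ 3 + 27 * p.2 ^ 2 = 0} := by
    ext ⟨x, y⟩
    simp only [Set.mem_range, Set.mem_setOf_eq, hg, Prod.mk.injEq]
    constructor
    · rintro ⟨t, rfl, rfl⟩
      refine ⟨fun hdvd => ?_, by ring⟩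
      have : IsUnit (-3 * (t : Z)^2) := (h3.neg).mul (t.isUnit.pow 2)
      exact (aux_isUnit_iff_not_dvd hn h5 _).mp this hdvd.1
    · rintro ⟨hne, heq⟩
      have keyx : (ℓ : Z) ∣ x → (ℓ : Z) ∣ y := by
        intro hx
        rw [aux_dvd_iff_pi hn] at hx ⊢
        have h27 : (27 : ZMod ℓ) ≠ 0 := by
          intro h0
          have : ((27 : ℕ) : ZMod ℓ) = 0 := by push_cast; exact h0
          rw [ZMod.natCast_eq_zero_iff] at this
          have : ℓ ∣ 3 ^ 3 := by norm_num at this ⊢; exact this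
          have := (Nat.prime_dvd_prime_iff_eq hp Nat.prime_three).mp (hp.dvd_of_dvd_pow this)
          omega
        have hπeq : 4 * (π x) ^ 3 + 27 * (π y) ^ 2 = 0 := by
          have := congrArg π heq
          simpa [map_add, map_mul, map_pow, map_ofNat] using this
        rw [hx] at hπeq
        have : (27 : ZMod ℓ) * (π y) ^ 2 = 0 := by linear_combination hπeq
        have : (π y) ^ 2 = 0 := by
          rcases mul_eq_zero.mp this with h | h
          · exact absurd h h27
          · exact h
        exact pow_eq_zero_iff (by norm_num) |>.mp this
      have keyy : (ℓ : Z) ∣ y → (ℓ : Z) ∣ x := by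
        intro hy
        rw [aux_dvd_iff_pi hn] at hy ⊢
        have h4 : (4 : ZMod ℓ) ≠ 0 := by
          intro h0
          have : ((4 : ℕ) : ZMod ℓ) = 0 := by push_cast; exact h0
          rw [ZMod.natCast_eq_zero_iff] at this
          have : ℓ ∣ 2 ^ 2 := by norm_num at this ⊢; exact this
          have := (Nat.prime_dvd_prime_iff_eq hp Nat.prime_two).mp (hp.dvd_of_dvd_pow this)
          omega
        have hπeq : 4 * (π x) ^ 3 + 27 * (π y) ^ 2 = 0 := by
          have := congrArg π heq
          simpa [map_add, map_mul, map_pow, map_ofNat] using this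
        rw [hy] at hπeq
        have : (4 : ZMod ℓ) * (π x) ^ 3 = 0 := by linear_combination hπeq
        have : (π x) ^ 3 = 0 := by
          rcases mul_eq_zero.mp this with h | h
          · exact absurd h h4
          · exact h
        exact pow_eq_zero_iff (by norm_num) |>.mp this
      have hxu : IsUnit x := by
        rw [aux_isUnit_iff_not_dvd hn h5]
        intro hx
        exact hne ⟨hx, keyx hx⟩
      have hyu : IsUnit y := by
        rw [aux_isUnit_iff_not_dvd hn h5]
        intro hy
        exact hne ⟨keyy hy, hy⟩
      obtain ⟨ux, hux⟩ := hxu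
      obtain ⟨u2, hu2⟩ := h2
      set a : Z := ((ux⁻¹ : Zˣ) : Z) with ha
      set b : Z := ((u2⁻¹ : Zˣ) : Z) with hb
      have h1 : x * a = 1 := by rw [← hux, ha]; exact ux.mul_inv
      have hh2 : 2 * b = 1 := by rw [← hu2, hb]; exact u2.mul_inv
      have htu : IsUnit (-3 * y * a * b) :=
        ((h3.neg.mul hyu).mul (ux⁻¹).isUnit).mul (u2⁻¹).isUnit
      obtain ⟨ut, hut⟩ := htu
      refine ⟨ut, ?_, ?_⟩
      · rw [hut]
        linear_combination (-a^2*b^2) * heq + (4*x*b^2*(x*a+1)) * h1 + (x*(2*b+1)) * hh2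
      · rw [hut]
        linear_combination (-2*y*a^3*b^3) * heq + (8*y*b^3*(x^2*a^2+x*a+1)) * h1 +
          (y*(4*b^2+2*b+1)) * hh2
  rw [← hrange, Nat.card_range_of_injective hinj]
  rw [Nat.card_eq_fintype_card, ZMod.card_units_eq_totient, Nat.totient_prime_pow hp hn]
  ring

lemma aux_pow_dvd (x : ℤ_[ℓ]) :
    (ℓ : ℤ_[ℓ]) ^ n ∣ x ↔ PadicInt.toZModPow n x = 0 := by
  rw [← Ideal.mem_span_singleton, ← PadicInt.ker_toZModPow, RingHom.mem_ker]

lemma aux_padic_dvd (hn : 1 ≤ n) (x : ℤ_[ℓ]) :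
    (ℓ : ℤ_[ℓ]) ∣ x ↔ (ℓ : ZMod (ℓ^n)) ∣ PadicInt.toZModPow n x := by
  haveI : NeZero (ℓ^n) := ⟨pow_ne_zero _ (Fact.out : ℓ.Prime).ne_zero⟩
  constructor
  · rintro ⟨c, rfl⟩
    exact ⟨PadicInt.toZModPow n c, by rw [map_mul, map_natCast]⟩
  · rintro ⟨c, hc⟩
    set x0 : ℤ_[ℓ] := ((c.val : ℕ) : ℤ_[ℓ]) with hx0
    have hx0' : PadicInt.toZModPow n x0 = c := by
      rw [hx0, map_natCast, ZMod.natCast_zmod_val]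
    have hker : PadicInt.toZModPow n (x - (ℓ : ℤ_[ℓ]) * x0) = 0 := by
      rw [map_sub, map_mul, map_natCast, hx0', hc, sub_self]
    rw [← aux_pow_dvd] at hker
    have hdvd : (ℓ : ℤ_[ℓ]) ∣ x - (ℓ : ℤ_[ℓ]) * x0 :=
      dvd_trans (dvd_pow_self _ (Nat.one_le_iff_ne_zero.mp hn)) hker
    have := dvd_add hdvd (Dvd.intro x0 rfl)
    simpa using this

lemma aux_fiber_ball (c : ZMod (ℓ^n)) :
    (PadicInt.toZModPow n : ℤ_[ℓ] →+* ZMod (ℓ^n)) ⁻¹' {c} =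
      Metric.closedBall ((c.val : ℕ) : ℤ_[ℓ]) ((ℓ : ℝ) ^ (-(n : ℤ))) := by
  haveI : NeZero (ℓ^n) := ⟨pow_ne_zero _ (Fact.out : ℓ.Prime).ne_zero⟩
  ext x
  rw [Set.mem_preimage, Set.mem_singleton_iff, Metric.mem_closedBall, dist_eq_norm,
    PadicInt.norm_le_pow_iff_mem_span_pow, ← PadicInt.ker_toZModPow, RingHom.mem_ker,
    map_sub, map_natCast, ZMod.natCast_zmod_val, sub_eq_zero]

end Aux

/-- For a prime `ℓ ≥ 5` and `n ≥ 1`, the Haar probability measure of the set of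
`(a,b) ∈ ℤ_ℓ × ℤ_ℓ` with `(a,b) ≢ (0,0) mod ℓ` and `v(4a³+27b²) ≥ n`
equals `(ℓ-1)/ℓ^{n+1}`. -/
theorem stmt6 (ℓ : ℕ) [Fact ℓ.Prime] (h5 : 5 ≤ ℓ) (n : ℕ) (hn : 1 ≤ n)
    (μ : Measure (ℤ_[ℓ] × ℤ_[ℓ])) [IsProbabilityMeasure μ] [μ.IsAddLeftInvariant] :
    μ {w : ℤ_[ℓ] × ℤ_[ℓ] |
        ¬ ((ℓ : ℤ_[ℓ]) ∣ w.1 ∧ (ℓ : ℤ_[ℓ]) ∣ w.2) ∧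
        (ℓ : ℤ_[ℓ]) ^ n ∣ (4 * w.1 ^ 3 + 27 * w.2 ^ 2)} =
      ((ℓ : ℝ≥0∞) - 1) / (ℓ : ℝ≥0∞) ^ (n + 1) := by
  have hp : ℓ.Prime := Fact.out
  haveI : NeZero (ℓ^n) := ⟨pow_ne_zero _ hp.ne_zero⟩
  set Z := ZMod (ℓ^n) with hZ
  set f : ℤ_[ℓ] × ℤ_[ℓ] → Z × Z :=
    fun w => (PadicInt.toZModPow n w.1, PadicInt.toZModPow n w.2) with hf
  set T : Set (Z × Z) := {p : Z × Z |
      ¬ ((ℓ : Z) ∣ p.1 ∧ (ℓ : Z) ∣ p.2) ∧ 4 * p.1 ^ 3 + 27 * p.2 ^ 2 = 0} with hT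
  -- fibers are measurable
  have hmeas : ∀ c : Z × Z, MeasurableSet (f ⁻¹' {c}) := by
    intro c
    have : f ⁻¹' {c} =
        ((PadicInt.toZModPow n : ℤ_[ℓ] →+* Z) ⁻¹' {c.1}) ×ˢ
        ((PadicInt.toZModPow n : ℤ_[ℓ] →+* Z) ⁻¹' {c.2}) := by
      ext w
      simp [hf, Prod.ext_iff, Set.mem_prod]
    rw [this, aux_fiber_ball, aux_fiber_ball]
    exact (measurableSet_closedBall).prod measurableSet_closedBall
  -- all fibers have the same measure
  have hadd : ∀ v w : ℤ_[ℓ] × ℤ_[ℓ], f (v + w) = f v + f w := by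
    intro v w
    simp [hf, Prod.ext_iff, map_add]
  have hfib : ∀ c : Z × Z, μ (f ⁻¹' {c}) = μ (f ⁻¹' {0}) := by
    intro c
    set v0 : ℤ_[ℓ] × ℤ_[ℓ] := (((c.1.val : ℕ) : ℤ_[ℓ]), ((c.2.val : ℕ) : ℤ_[ℓ])) with hv0
    have hfv0 : f v0 = c := by
      simp only [hf, hv0]
      rw [Prod.ext_iff]
      constructor <;> simp [map_natCast, ZMod.natCast_zmod_val]
    have key : (fun w => v0 + w) ⁻¹' (f ⁻¹' {c}) = f ⁻¹' {0} := by
      ext w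
      simp only [Set.mem_preimage, Set.mem_singleton_iff, hadd, hfv0]
      constructor
      · intro h
        have := congrArg (fun z => z - c) h
        simpa using this
      · intro h
        rw [h, add_zero]
    rw [← key, measure_preimage_add]
  -- partition into fibers
  have hdisj : (↑(Finset.univ : Finset (Z × Z)) : Set (Z × Z)).PairwiseDisjoint
      (fun c => f ⁻¹' {c}) := by
    intro c _ d _ hcd
    refine Set.disjoint_left.mpr ?_
    intro w hwc hwd
    exact hcd (by
      simp only [Set.mem_preimage, Set.mem_singleton_iff] at hwc hwd
      rw [← hwc, ← hwd])
  have hsum := measure_biUnion_finset (μ := μ) hdisj (fun c _ => hmeas c)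
  have hcover : ⋃ c ∈ (Finset.univ : Finset (Z × Z)), f ⁻¹' {c} = Set.univ := by
    ext w
    simp
  rw [hcover] at hsum
  have hone : ((ℓ ^ n * ℓ ^ n : ℕ) : ℝ≥0∞) * μ (f ⁻¹' {0}) = 1 := by
    have hsum2 : ∑ c ∈ (Finset.univ : Finset (Z × Z)), μ (f ⁻¹' {c}) =
        ((Fintype.card (Z × Z) : ℕ) : ℝ≥0∞) * μ (f ⁻¹' {0}) := by
      calc ∑ c ∈ (Finset.univ : Finset (Z × Z)), μ (f ⁻¹' {c})
          = ∑ _c ∈ (Finset.univ : Finset (Z × Z)), μ (f ⁻¹' {0}) :=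
            Finset.sum_congr rfl fun c _ => hfib c
        _ = _ := by rw [Finset.sum_const, Finset.card_univ, nsmul_eq_mul]
    rw [hsum2] at hsum
    have hcardZ : (Fintype.card (Z × Z) : ℕ) = ℓ ^ n * ℓ ^ n := by
      rw [Fintype.card_prod]
      have : Fintype.card Z = ℓ ^ n := ZMod.card (ℓ ^ n)
      rw [this]
    rw [hcardZ] at hsum
    rw [← hsum, measure_univ]
  have hLn0 : ((ℓ ^ n * ℓ ^ n : ℕ) : ℝ≥0∞) ≠ 0 := by
    simp [pow_ne_zero, hp.ne_zero]
  have hLnt : ((ℓ ^ n * ℓ ^ n : ℕ) : ℝ≥0∞) ≠ ⊤ := ENNReal.natCast_ne_top _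
  have hμ0 : μ (f ⁻¹' {0}) = ((ℓ ^ n * ℓ ^ n : ℕ) : ℝ≥0∞)⁻¹ := by
    calc μ (f ⁻¹' {0}) = (((ℓ ^ n * ℓ ^ n : ℕ) : ℝ≥0∞)⁻¹ * ((ℓ ^ n * ℓ ^ n : ℕ) : ℝ≥0∞)) *
        μ (f ⁻¹' {0}) := by rw [ENNReal.inv_mul_cancel hLn0 hLnt, one_mul]
      _ = ((ℓ ^ n * ℓ ^ n : ℕ) : ℝ≥0∞)⁻¹ := by rw [mul_assoc, hone, mul_one]
  -- the set equals the preimage of T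
  have hSeq : {w : ℤ_[ℓ] × ℤ_[ℓ] |
        ¬ ((ℓ : ℤ_[ℓ]) ∣ w.1 ∧ (ℓ : ℤ_[ℓ]) ∣ w.2) ∧
        (ℓ : ℤ_[ℓ]) ^ n ∣ (4 * w.1 ^ 3 + 27 * w.2 ^ 2)} = f ⁻¹' T := by
    ext w
    simp only [Set.mem_setOf_eq, Set.mem_preimage, hT, hf]
    apply and_congr
    · exact not_congr (and_congr (aux_padic_dvd hn w.1) (aux_padic_dvd hn w.2))
    · rw [aux_pow_dvd]
      constructor
      · intro h
        have : PadicInt.toZModPow n (4 * w.1 ^ 3 + 27 * w.2 ^ 2) =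
            4 * (PadicInt.toZModPow n w.1) ^ 3 + 27 * (PadicInt.toZModPow n w.2) ^ 2 := by
          simp [map_add, map_mul, map_pow, map_ofNat]
        rw [← this]; exact h
      · intro h
        have : PadicInt.toZModPow n (4 * w.1 ^ 3 + 27 * w.2 ^ 2) =
            4 * (PadicInt.toZModPow n w.1) ^ 3 + 27 * (PadicInt.toZModPow n w.2) ^ 2 := by
          simp [map_add, map_mul, map_pow, map_ofNat]
        rw [this]; exact h
  rw [hSeq]
  -- decompose the preimage of T
  have hTfin : T.Finite := Set.toFinite T
  have hdecomp : f ⁻¹' T = ⋃ c ∈ hTfin.toFinset, f ⁻¹' {c} := by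
    ext w
    simp [Set.Finite.mem_toFinset, hT]
  rw [hdecomp, measure_biUnion_finset (hdisj.subset (by simp)) (fun c _ => hmeas c)]
  have : ∑ c ∈ hTfin.toFinset, μ (f ⁻¹' {c}) =
      (hTfin.toFinset.card : ℝ≥0∞) * μ (f ⁻¹' {0}) := by
    rw [Finset.sum_congr rfl fun c _ => hfib c, Finset.sum_const, nsmul_eq_mul]
  rw [this, hμ0]
  have hcard : hTfin.toFinset.card = (ℓ - 1) * ℓ ^ (n - 1) := by
    rw [← Set.ncard_eq_toFinset_card T hTfin, ← Nat.card_coe_set_eq]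
    exact aux_count hn h5
  rw [hcard]
  -- final arithmetic
  have hL0 : (ℓ : ℝ≥0∞) ≠ 0 := Nat.cast_ne_zero.mpr hp.ne_zero
  have hLt : (ℓ : ℝ≥0∞) ≠ ⊤ := ENNReal.natCast_ne_top ℓ
  push_cast [ENNReal.natCast_sub]
  rw [div_eq_mul_inv]
  have hexp : (ℓ : ℝ≥0∞) ^ n * (ℓ : ℝ≥0∞) ^ n =
      (ℓ : ℝ≥0∞) ^ (n - 1) * (ℓ : ℝ≥0∞) ^ (n + 1) := by
    rw [← pow_add, ← pow_add]
    congr 1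
    omega
  rw [hexp, ENNReal.mul_inv (Or.inl (pow_ne_zero _ hL0)) (Or.inl (ENNReal.pow_ne_top hLt))]
  have hc : (ℓ : ℝ≥0∞) ^ (n - 1) * ((ℓ : ℝ≥0∞) ^ (n - 1))⁻¹ = 1 :=
    ENNReal.mul_inv_cancel (pow_ne_zero _ hL0) (ENNReal.pow_ne_top hLt)
  calc ((ℓ : ℝ≥0∞) - 1) * (ℓ : ℝ≥0∞) ^ (n - 1) *
        (((ℓ : ℝ≥0∞) ^ (n - 1))⁻¹ * ((ℓ : ℝ≥0∞) ^ (n + 1))⁻¹)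
      = ((ℓ : ℝ≥0∞) - 1) * ((ℓ : ℝ≥0∞) ^ (n - 1) * ((ℓ : ℝ≥0∞) ^ (n - 1))⁻¹) *
        ((ℓ : ℝ≥0∞) ^ (n + 1))⁻¹ := by ring
    _ = ((ℓ : ℝ≥0∞) - 1) * ((ℓ : ℝ≥0∞) ^ (n + 1))⁻¹ := by rw [hc, mul_one]
end

section
/- Call a pair (a,b) ∈ ℤ × ℤ minimal if there is no prime ℓ with ℓ⁴ ∣ a and ℓ⁶ ∣ b. For x > 0, let N(x) denote the number of pairs (a,b) ∈ ℤ × ℤ with H(a,b) := max(4|a|³, 27b²) ≤ x, and let N_min(x) denote the number of such pairs that are minimal. Then N_min(x)/N(x) tends to 1/ζ(10) = ∏_ℓ (1 − ℓ^{-10}) as x → ∞, where the product is over all primes ℓ and ζ(10) = ∑_{n≥1} n^{-10}. -/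
open Filter


open Filter ArithmeticFunction
open scoped ArithmeticFunction.Moebius ArithmeticFunction.zeta

noncomputable def f10 : ℕ →*₀ ℝ where
  toFun := fun n => ((n : ℝ) ^ 10)⁻¹
  map_zero' := by norm_num
  map_one' := by norm_num
  map_mul' := by intro m n; push_cast; rw [mul_pow, mul_inv]

lemma summable_f10 : Summable (fun n => ‖f10 n‖) := by
  have : Summable (fun n : ℕ => ((n : ℝ) ^ 10)⁻¹) := Real.summable_nat_pow_inv.mpr (by norm_num)
  refine this.congr fun n => ?_
  have h2 : (0:ℝ) ≤ ((n : ℝ) ^ 10)⁻¹ := by positivity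
  simp [f10, Real.norm_eq_abs, abs_of_nonneg h2]

noncomputable def g10 : ℕ → ℝ := fun n => (μ n : ℝ) * ((n : ℝ) ^ 10)⁻¹

lemma summable_g10 : Summable (fun n => ‖g10 n‖) := by
  have h : Summable (fun n : ℕ => ((n : ℝ) ^ 10)⁻¹) := Real.summable_nat_pow_inv.mpr (by norm_num)
  refine h.of_norm_bounded fun n => ?_
  have h1 : |(μ n : ℝ)| ≤ 1 := by
    have := ArithmeticFunction.abs_moebius_le_one (n := n)
    rw [← Int.cast_abs]
    exact_mod_cast this
  have h2 : (0:ℝ) ≤ ((n : ℝ) ^ 10)⁻¹ := by positivity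
  calc ‖‖g10 n‖‖ = |g10 n| := by simp [Real.norm_eq_abs]
  _ = |(μ n : ℝ)| * ((n : ℝ) ^ 10)⁻¹ := by rw [g10, abs_mul, abs_of_nonneg h2]
  _ ≤ 1 * ((n : ℝ) ^ 10)⁻¹ := mul_le_mul_of_nonneg_right h1 h2
  _ = ((n : ℝ) ^ 10)⁻¹ := one_mul _

lemma tsum_g10_pow (p : ℕ) (hp : p.Prime) :
    ∑' e : ℕ, g10 (p ^ e) = 1 - ((p : ℝ) ^ 10)⁻¹ := by
  have hv : ∀ e ∉ ({0, 1} : Finset ℕ), g10 (p ^ e) = 0 := by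
    intro e he
    simp only [Finset.mem_insert, Finset.mem_singleton] at he
    push_neg at he
    have : μ (p ^ e) = 0 := by
      rw [moebius_apply_prime_pow hp he.1, if_neg he.2]
    simp [g10, this]
  rw [tsum_eq_sum hv, Finset.sum_insert (by norm_num), Finset.sum_singleton]
  simp [g10, moebius_apply_prime hp]
  ring

lemma hasProd_P : HasProd (fun p : Nat.Primes => (1 - f10 (p : ℕ))⁻¹) (∑' n, f10 n) :=
  EulerProduct.eulerProduct_completely_multiplicative_hasProd summable_f10

lemma hasProd_Q : HasProd (fun p : Nat.Primes => 1 - (((p : ℕ) : ℝ) ^ 10)⁻¹) (∑' n, g10 n) := by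
  have hmul : ∀ {m n : ℕ}, Nat.Coprime m n → g10 (m * n) = g10 m * g10 n := by
    intro m n hmn
    simp only [g10, isMultiplicative_moebius.map_mul_of_coprime hmn]
    push_cast
    rw [mul_pow, mul_inv]
    ring
  have h := EulerProduct.eulerProduct_hasProd (f := g10) (by simp [g10]) hmul summable_g10
    (by simp [g10])
  have heq : (fun p : Nat.Primes => 1 - (((p : ℕ) : ℝ) ^ 10)⁻¹)
      = fun p : Nat.Primes => ∑' e, g10 ((p : ℕ) ^ e) :=
    funext fun p => (tsum_g10_pow p p.2).symm
  rw [heq]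
  exact h

lemma one_sub_pos (p : Nat.Primes) : (0 : ℝ) < 1 - (((p : ℕ) : ℝ) ^ 10)⁻¹ := by
  have hp2 : (2 : ℝ) ≤ ((p : ℕ) : ℝ) := by exact_mod_cast p.2.two_le
  have h1 : (1 : ℝ) < ((p : ℕ) : ℝ) ^ 10 := by
    refine one_lt_pow₀ (by linarith) (by norm_num)
  have := inv_lt_one_of_one_lt₀ h1
  linarith

lemma one_sub_ne (p : Nat.Primes) : (1 : ℝ) - f10 (p : ℕ) ≠ 0 := by
  have : f10 (p : ℕ) = (((p : ℕ) : ℝ) ^ 10)⁻¹ := rfl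
  rw [this]
  exact ne_of_gt (one_sub_pos p)

lemma ST_eq_one : (∑' n, f10 n) * (∑' n, g10 n) = 1 := by
  have h := hasProd_P.mul hasProd_Q
  have heq : (fun p : Nat.Primes => (1 - f10 (p : ℕ))⁻¹ * (1 - (((p : ℕ) : ℝ) ^ 10)⁻¹))
      = fun _ => (1 : ℝ) := by
    funext p
    have : f10 (p : ℕ) = (((p : ℕ) : ℝ) ^ 10)⁻¹ := rfl
    rw [← this, inv_mul_cancel₀ (one_sub_ne p)]
  rw [heq] at h
  exact h.unique hasProd_one


noncomputable def Ax (x : ℝ) : ℕ := ⌊(x/4) ^ ((3:ℝ)⁻¹)⌋₊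
noncomputable def Bx (x : ℝ) : ℕ := ⌊(x/27) ^ ((2:ℝ)⁻¹)⌋₊

def condH (x : ℝ) (w : ℤ × ℤ) : Prop := ((max (4 * |w.1| ^ 3) (27 * w.2 ^ 2) : ℤ) : ℝ) ≤ x
def mini (w : ℤ × ℤ) : Prop := ∀ ℓ : ℕ, ℓ.Prime → ¬ ((ℓ : ℤ) ^ 4 ∣ w.1 ∧ (ℓ : ℤ) ^ 6 ∣ w.2)

lemma pow_le_iff_le_floor (t : ℝ) (ht : 0 ≤ t) (m k : ℕ) (hk : k ≠ 0) :
    (m : ℝ) ^ k ≤ t ↔ m ≤ ⌊t ^ ((k : ℝ)⁻¹)⌋₊ := by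
  rw [Nat.le_floor_iff (Real.rpow_nonneg ht _)]
  constructor
  · intro h
    have h2 : ((m : ℝ) ^ k) ^ ((k:ℝ)⁻¹) ≤ t ^ ((k:ℝ)⁻¹) :=
      Real.rpow_le_rpow (by positivity) h (by positivity)
    rwa [← Real.rpow_natCast (m:ℝ) k, ← Real.rpow_mul (by positivity),
      mul_inv_cancel₀ (by exact_mod_cast hk), Real.rpow_one] at h2
  · intro h
    calc (m : ℝ) ^ k ≤ (t ^ ((k:ℝ)⁻¹)) ^ k :=
          pow_le_pow_left₀ (by positivity) h k
    _ = t := Real.rpow_inv_natCast_pow ht hk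

lemma condH_iff {x : ℝ} (hx : 0 ≤ x) (w : ℤ × ℤ) :
    condH x w ↔ |w.1| ≤ (Ax x : ℤ) ∧ |w.2| ≤ (Bx x : ℤ) := by
  obtain ⟨a, b⟩ := w
  have h1 : ((max (4 * |a| ^ 3) (27 * b ^ 2) : ℤ) : ℝ) ≤ x ↔
      ((4 * |a| ^ 3 : ℤ) : ℝ) ≤ x ∧ ((27 * b ^ 2 : ℤ) : ℝ) ≤ x := by
    rw [Int.cast_max, max_le_iff]
  rw [condH, h1]
  have ha : ((4 * |a| ^ 3 : ℤ) : ℝ) ≤ x ↔ |a| ≤ (Ax x : ℤ) := by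
    have e1 : ((4 * |a| ^ 3 : ℤ) : ℝ) = 4 * ((a.natAbs : ℝ)) ^ 3 := by
      push_cast [Int.cast_abs]
      rw [Nat.cast_natAbs]
      simp [Int.cast_abs]
    have e2 : 4 * ((a.natAbs : ℝ)) ^ 3 ≤ x ↔ ((a.natAbs : ℝ)) ^ 3 ≤ x / 4 := by
      rw [le_div_iff₀ (by norm_num : (0:ℝ) < 4)]
      constructor <;> intro h <;> linarith
    rw [e1, e2, pow_le_iff_le_floor (x/4) (by positivity) _ 3 (by norm_num),
      Int.abs_eq_natAbs]
    exact (Nat.cast_le (α := ℤ)).symm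
  have hb : ((27 * b ^ 2 : ℤ) : ℝ) ≤ x ↔ |b| ≤ (Bx x : ℤ) := by
    have e1 : ((27 * b ^ 2 : ℤ) : ℝ) = 27 * ((b.natAbs : ℝ)) ^ 2 := by
      rw [show b ^ 2 = |b| ^ 2 from (sq_abs b).symm]
      push_cast [Int.cast_abs]
      rw [Nat.cast_natAbs]
      simp [Int.cast_abs]
    have e2 : 27 * ((b.natAbs : ℝ)) ^ 2 ≤ x ↔ ((b.natAbs : ℝ)) ^ 2 ≤ x / 27 := by
      rw [le_div_iff₀ (by norm_num : (0:ℝ) < 27)]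
      constructor <;> intro h <;> linarith
    rw [e1, e2, pow_le_iff_le_floor (x/27) (by positivity) _ 2 (by norm_num),
      Int.abs_eq_natAbs]
    exact (Nat.cast_le (α := ℤ)).symm
  rw [ha, hb]

lemma cardZ (n : ℕ) : Nat.card {a : ℤ // |a| ≤ (n : ℤ)} = 2 * n + 1 := by
  have e : {a : ℤ // |a| ≤ (n : ℤ)} ≃ {a : ℤ // a ∈ Finset.Icc (-(n:ℤ)) n} :=
    Equiv.subtypeEquivRight (fun a => by rw [Finset.mem_Icc, abs_le])
  rw [Nat.card_congr e, Nat.card_eq_finsetCard, Int.card_Icc]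
  omega

lemma cardZdvd (n m : ℕ) (hm : 0 < m) :
    Nat.card {a : ℤ // |a| ≤ (n : ℤ) ∧ (m : ℤ) ∣ a} = 2 * (n / m) + 1 := by
  have hm' : (0 : ℤ) < (m : ℤ) := by exact_mod_cast hm
  have key : ∀ c : ℤ, |c| ≤ ((n / m : ℕ) : ℤ) ↔ |(m : ℤ) * c| ≤ (n : ℤ) := by
    intro c
    rw [Int.natCast_div, abs_mul, abs_of_nonneg hm'.le, Int.le_ediv_iff_mul_le hm', mul_comm]
  let e : {c : ℤ // |c| ≤ ((n / m : ℕ) : ℤ)} ≃ {a : ℤ // |a| ≤ (n : ℤ) ∧ (m : ℤ) ∣ a} :=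
    { toFun := fun c => ⟨(m : ℤ) * c.1, (key c.1).1 c.2, ⟨c.1, rfl⟩⟩
      invFun := fun a => ⟨a.1 / (m : ℤ), by
        obtain ⟨ha, k, hk⟩ := a.2
        have hd : a.1 / (m : ℤ) = k := by rw [hk]; exact Int.mul_ediv_cancel_left k hm'.ne'
        rw [hd]
        exact (key k).2 (hk ▸ ha)⟩
      left_inv := fun c => Subtype.ext (Int.mul_ediv_cancel_left c.1 hm'.ne')
      right_inv := fun a => Subtype.ext (Int.mul_ediv_cancel' a.2.2) }
  rw [← Nat.card_congr e, cardZ]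

lemma cardProd (P Q : ℤ → Prop) :
    Nat.card {w : ℤ × ℤ // P w.1 ∧ Q w.2} =
      Nat.card {a : ℤ // P a} * Nat.card {b : ℤ // Q b} := by
  rw [← Nat.card_prod]
  exact Nat.card_congr (Equiv.subtypeProdEquivProd)

lemma card_box {x : ℝ} (hx : 0 ≤ x) :
    Nat.card {w : ℤ × ℤ // condH x w} = (2 * Ax x + 1) * (2 * Bx x + 1) := by
  rw [Nat.card_congr (Equiv.subtypeEquivRight (condH_iff hx)),
    cardProd (fun a => |a| ≤ (Ax x : ℤ)) (fun b => |b| ≤ (Bx x : ℤ)), cardZ, cardZ]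

lemma condH_zero {x : ℝ} (hx : 0 ≤ x) : condH x (0, 0) := by
  rw [condH_iff hx]
  simp

lemma card_box_dvd {x : ℝ} (hx : 0 ≤ x) (d : ℕ) (hd : 0 < d) :
    Nat.card {w : ℤ × ℤ // condH x w ∧ ((d:ℤ)^4 ∣ w.1 ∧ (d:ℤ)^6 ∣ w.2)} =
      (2 * (Ax x / d^4) + 1) * (2 * (Bx x / d^6) + 1) := by
  have e : {w : ℤ × ℤ // condH x w ∧ ((d:ℤ)^4 ∣ w.1 ∧ (d:ℤ)^6 ∣ w.2)} ≃
      {w : ℤ × ℤ // (|w.1| ≤ (Ax x : ℤ) ∧ ((d^4 : ℕ) : ℤ) ∣ w.1) ∧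
        (|w.2| ≤ (Bx x : ℤ) ∧ ((d^6 : ℕ) : ℤ) ∣ w.2)} := by
    refine Equiv.subtypeEquivRight (fun w => ?_)
    rw [condH_iff hx]
    push_cast
    tauto
  rw [Nat.card_congr e, cardProd (fun a => |a| ≤ (Ax x:ℤ) ∧ ((d^4:ℕ):ℤ) ∣ a)
    (fun b => |b| ≤ (Bx x:ℤ) ∧ ((d^6:ℕ):ℤ) ∣ b),
    cardZdvd _ _ (by positivity), cardZdvd _ _ (by positivity)]

lemma lcm_pow_dvd {m n k a : ℕ} (hm : 0 < m) (hn : 0 < n)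
    (h1 : m ^ k ∣ a) (h2 : n ^ k ∣ a) : Nat.lcm m n ^ k ∣ a := by
  rcases Nat.eq_zero_or_pos a with rfl | ha
  · exact dvd_zero _
  have hl : Nat.lcm m n ≠ 0 := Nat.lcm_ne_zero hm.ne' hn.ne'
  rw [← Nat.factorization_le_iff_dvd (pow_ne_zero k hl) ha.ne', Nat.factorization_pow,
    Nat.factorization_lcm hm.ne' hn.ne']
  have hm' := (Nat.factorization_le_iff_dvd (pow_ne_zero k hm.ne') ha.ne').2 h1
  have hn' := (Nat.factorization_le_iff_dvd (pow_ne_zero k hn.ne') ha.ne').2 h2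
  rw [Nat.factorization_pow] at hm' hn'
  rw [Finsupp.le_def] at hm' hn' ⊢
  intro p
  have h1p := hm' p
  have h2p := hn' p
  simp only [Finsupp.smul_apply, Finsupp.sup_apply, smul_eq_mul] at h1p h2p ⊢
  rcases le_total (m.factorization p) (n.factorization p) with h | h
  · rwa [sup_eq_right.mpr h]
  · rwa [sup_eq_left.mpr h]

-- per-element Möbius identity
open scoped Classical in
lemma per_elem (a b : ℤ) (A B : ℕ) (ha : |a| ≤ (A:ℤ)) (hb : |b| ≤ (B:ℤ))
    (hw : ¬(a = 0 ∧ b = 0)) :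
    (if (∀ ℓ : ℕ, ℓ.Prime → ¬ ((ℓ : ℤ) ^ 4 ∣ a ∧ (ℓ : ℤ) ^ 6 ∣ b)) then (1:ℤ) else 0)
      = ∑ d ∈ Finset.Icc 1 (A + B),
          if ((d:ℤ)^4 ∣ a ∧ (d:ℤ)^6 ∣ b) then μ d else 0 := by
  classical
  set na := a.natAbs with hna
  set nb := b.natAbs with hnb
  have hnaA : na ≤ A := by
    rw [← @Nat.cast_le ℤ]; rw [Int.abs_eq_natAbs] at ha; exact_mod_cast ha
  have hnbB : nb ≤ B := by
    rw [← @Nat.cast_le ℤ]; rw [Int.abs_eq_natAbs] at hb; exact_mod_cast hb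
  have hne : ¬(na = 0 ∧ nb = 0) := by
    rw [hna, hnb]; simpa [Int.natAbs_eq_zero] using hw
  have hdvd4 : ∀ d : ℕ, ((d:ℤ)^4 ∣ a ↔ d^4 ∣ na) := by
    intro d; rw [← Nat.cast_pow, Int.natCast_dvd]
  have hdvd6 : ∀ d : ℕ, ((d:ℤ)^6 ∣ b ↔ d^6 ∣ nb) := by
    intro d; rw [← Nat.cast_pow, Int.natCast_dvd]
  set S : Finset ℕ := (Finset.Icc 1 (A + B)).filter (fun d => d^4 ∣ na ∧ d^6 ∣ nb) with hS
  have mem_S : ∀ d : ℕ, d ∈ S ↔ 0 < d ∧ d^4 ∣ na ∧ d^6 ∣ nb := by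
    intro d
    rw [hS, Finset.mem_filter, Finset.mem_Icc]
    constructor
    · rintro ⟨⟨h1, _⟩, h⟩; exact ⟨h1, h⟩
    · rintro ⟨h0, h4, h6⟩
      refine ⟨⟨h0, ?_⟩, h4, h6⟩
      rcases Nat.eq_zero_or_pos na with h | h
      · have hnb0 : 0 < nb := by omega
        calc d ≤ d^6 := Nat.le_self_pow (by norm_num) d
        _ ≤ nb := Nat.le_of_dvd hnb0 h6
        _ ≤ B := hnbB
        _ ≤ A + B := Nat.le_add_left _ _
      · calc d ≤ d^4 := Nat.le_self_pow (by norm_num) d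
        _ ≤ na := Nat.le_of_dvd h h4
        _ ≤ A := hnaA
        _ ≤ A + B := Nat.le_add_right _ _
  have h1S : (1:ℕ) ∈ S := (mem_S 1).2 ⟨one_pos, by simpa using one_dvd _, by simpa using one_dvd _⟩
  set g : ℕ := S.max' ⟨1, h1S⟩ with hg
  have hgS : g ∈ S := S.max'_mem _
  obtain ⟨hg0, hg4, hg6⟩ := (mem_S g).1 hgS
  have hsub : ∀ d ∈ S, d ∣ g := by
    intro d hd
    obtain ⟨hd0, hd4, hd6⟩ := (mem_S d).1 hd
    have hl4 : Nat.lcm d g ^ 4 ∣ na := lcm_pow_dvd hd0 hg0 hd4 hg4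
    have hl6 : Nat.lcm d g ^ 6 ∣ nb := lcm_pow_dvd hd0 hg0 hd6 hg6
    have hlpos : 0 < Nat.lcm d g := Nat.pos_of_ne_zero (Nat.lcm_ne_zero hd0.ne' hg0.ne')
    have hlS : Nat.lcm d g ∈ S := (mem_S _).2 ⟨hlpos, hl4, hl6⟩
    have h1 : Nat.lcm d g ≤ g := S.le_max' _ hlS
    have h2 : g ≤ Nat.lcm d g := Nat.le_of_dvd hlpos (Nat.dvd_lcm_right d g)
    have : Nat.lcm d g = g := le_antisymm h1 h2
    exact this ▸ Nat.dvd_lcm_left d g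
  have hSdiv : S = g.divisors := by
    ext d
    rw [Nat.mem_divisors]
    constructor
    · intro hd; exact ⟨hsub d hd, hg0.ne'⟩
    · rintro ⟨hd, -⟩
      have hd0 : 0 < d := by
        rcases Nat.eq_zero_or_pos d with rfl | h
        · exact absurd (zero_dvd_iff.mp hd) hg0.ne'
        · exact h
      exact (mem_S d).2 ⟨hd0, (pow_dvd_pow_of_dvd hd 4).trans hg4,
        (pow_dvd_pow_of_dvd hd 6).trans hg6⟩
  have hmoeb : ∑ d ∈ S, μ d = if g = 1 then 1 else 0 := by
    rw [hSdiv]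
    calc ∑ d ∈ g.divisors, μ d = (μ * (ζ : ArithmeticFunction ℤ)) g := by
          rw [coe_mul_zeta_apply]
    _ = (1 : ArithmeticFunction ℤ) g := by rw [moebius_mul_coe_zeta]
    _ = if g = 1 then 1 else 0 := one_apply
  have hmini : (∀ ℓ : ℕ, ℓ.Prime → ¬ ((ℓ : ℤ) ^ 4 ∣ a ∧ (ℓ : ℤ) ^ 6 ∣ b)) ↔ g = 1 := by
    constructor
    · intro h
      by_contra hg1
      have hp : g.minFac.Prime := Nat.minFac_prime hg1
      have hmem : g.minFac ∈ S := by
        rw [hSdiv, Nat.mem_divisors]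
        exact ⟨Nat.minFac_dvd g, hg0.ne'⟩
      obtain ⟨-, h4, h6⟩ := (mem_S _).1 hmem
      exact h g.minFac hp ⟨(hdvd4 _).2 h4, (hdvd6 _).2 h6⟩
    · intro hg1 ℓ hℓ ⟨h4, h6⟩
      have : ℓ ∈ S := (mem_S ℓ).2 ⟨hℓ.pos, (hdvd4 ℓ).1 h4, (hdvd6 ℓ).1 h6⟩
      have := hsub ℓ this
      rw [hg1, Nat.dvd_one] at this
      exact hℓ.ne_one this
  calc (if (∀ ℓ : ℕ, ℓ.Prime → ¬ ((ℓ : ℤ) ^ 4 ∣ a ∧ (ℓ : ℤ) ^ 6 ∣ b)) then (1:ℤ) else 0)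
      = if g = 1 then 1 else 0 := by rw [if_congr hmini rfl rfl]
  _ = ∑ d ∈ S, μ d := hmoeb.symm
  _ = ∑ d ∈ Finset.Icc 1 (A + B), if (d^4 ∣ na ∧ d^6 ∣ nb) then μ d else 0 := by
      rw [hS, Finset.sum_filter]
  _ = ∑ d ∈ Finset.Icc 1 (A + B), if ((d:ℤ)^4 ∣ a ∧ (d:ℤ)^6 ∣ b) then μ d else 0 := by
      refine Finset.sum_congr rfl (fun d _ => ?_)
      exact if_congr ((hdvd4 d).and (hdvd6 d)).symm rfl rfl

open scoped Classical in
lemma card_min_eq {x : ℝ} (hx : 0 ≤ x) :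
    (Nat.card {w : ℤ × ℤ // condH x w ∧ mini w} : ℤ)
      = ∑ d ∈ Finset.Icc 1 (Ax x + Bx x),
          μ d * ((((2 * (Ax x / d^4) + 1) * (2 * (Bx x / d^6) + 1) : ℕ) : ℤ) - 1) := by
  set A := Ax x with hA
  set B := Bx x with hB
  set T : Finset (ℤ × ℤ) := (Finset.Icc (-(A:ℤ)) A) ×ˢ (Finset.Icc (-(B:ℤ)) B) with hT
  have memT : ∀ w : ℤ × ℤ, w ∈ T ↔ condH x w := by
    intro w
    rw [condH_iff hx]
    simp [hT, Finset.mem_product, Finset.mem_Icc, abs_le, hA, hB]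
  have h0T : ((0,0) : ℤ × ℤ) ∈ T := (memT _).2 (condH_zero hx)
  have hmini0 : ¬ mini (0,0) := by
    intro h
    exact h 2 Nat.prime_two (by simp)
  -- Step A
  have hcard1 : Nat.card {w : ℤ × ℤ // condH x w ∧ mini w}
      = (T.filter (fun w => mini w)).card := by
    rw [← Nat.card_eq_finsetCard]
    refine Nat.card_congr (Equiv.subtypeEquivRight (fun w => ?_))
    rw [Finset.mem_filter, memT]
  have hTndvd : ∀ d : ℕ, ((0:ℤ),(0:ℤ)) ∈ T.filter (fun w => (d:ℤ)^4 ∣ w.1 ∧ (d:ℤ)^6 ∣ w.2) := by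
    intro d
    rw [Finset.mem_filter]
    exact ⟨h0T, dvd_zero _, dvd_zero _⟩
  have hcard2 : ∀ d : ℕ, 0 < d → (T.filter (fun w => (d:ℤ)^4 ∣ w.1 ∧ (d:ℤ)^6 ∣ w.2)).card
      = (2 * (A / d^4) + 1) * (2 * (B / d^6) + 1) := by
    intro d hd
    rw [← card_box_dvd hx d hd, ← Nat.card_eq_finsetCard]
    refine (Nat.card_congr (Equiv.subtypeEquivRight (fun w => ?_))).symm
    rw [Finset.mem_filter, memT]
  -- erase (0,0)
  have hfe : (T.filter (fun w => mini w)) = ((T.erase (0,0)).filter (fun w => mini w)) := by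
    rw [Finset.filter_erase, Finset.erase_eq_of_notMem (by
      rw [Finset.mem_filter]; rintro ⟨-, h⟩; exact hmini0 h)]
  rw [hcard1, hfe]
  rw [Finset.card_filter]
  push_cast
  have hper : ∀ w ∈ T.erase (0,0),
      (if mini w then (1:ℤ) else 0)
        = ∑ d ∈ Finset.Icc 1 (A + B), if ((d:ℤ)^4 ∣ w.1 ∧ (d:ℤ)^6 ∣ w.2) then μ d else 0 := by
    intro w hw
    obtain ⟨hwne, hwT⟩ := Finset.mem_erase.1 hw
    have hcond := (memT w).1 hwT
    obtain ⟨ha, hb⟩ := (condH_iff hx w).1 hcond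
    have hw0 : ¬(w.1 = 0 ∧ w.2 = 0) := by
      rintro ⟨h1, h2⟩
      exact hwne (Prod.ext h1 h2)
    exact per_elem w.1 w.2 A B ha hb hw0
  rw [Finset.sum_congr rfl hper, Finset.sum_comm]
  refine Finset.sum_congr rfl (fun d hd => ?_)
  have hd1 : 0 < d := by
    rw [Finset.mem_Icc] at hd; exact hd.1
  rw [← Finset.sum_filter, Finset.sum_const, Finset.filter_erase,
    Finset.card_erase_of_mem (hTndvd d), hcard2 d hd1]
  have hge : 1 ≤ (2 * (A / d^4) + 1) * (2 * (B / d^6) + 1) := by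
    have : 0 < (2 * (A / d^4) + 1) * (2 * (B / d^6) + 1) := by positivity
    omega
  rw [nsmul_eq_mul]
  push_cast [Nat.cast_sub hge]
  ring

noncomputable def Fr (x : ℝ) (d : ℕ) : ℝ :=
  (μ d : ℝ) * ((2 * ((Ax x / d^4 : ℕ) : ℝ) + 1) * (2 * ((Bx x / d^6 : ℕ) : ℝ) + 1) - 1)
    / ((2 * (Ax x : ℝ) + 1) * (2 * (Bx x : ℝ) + 1))

lemma ratio_eq {x : ℝ} (hx : 0 ≤ x) :
    (Nat.card {w : ℤ × ℤ // condH x w ∧ mini w} : ℝ)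
      / (Nat.card {w : ℤ × ℤ // condH x w} : ℝ) = ∑' d : ℕ, Fr x d := by
  have hsupp : ∀ d ∉ Finset.Icc 1 (Ax x + Bx x), Fr x d = 0 := by
    intro d hd
    rw [Finset.mem_Icc] at hd
    push_neg at hd
    rcases Nat.eq_zero_or_pos d with rfl | hd1
    · simp [Fr]
    · have hdgt : Ax x + Bx x < d := hd hd1
      have h4 : Ax x < d^4 := lt_of_lt_of_le (lt_of_le_of_lt (Nat.le_add_right _ _) hdgt)
        (Nat.le_self_pow (by norm_num) d)
      have h6 : Bx x < d^6 := lt_of_lt_of_le (lt_of_le_of_lt (Nat.le_add_left _ _) hdgt)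
        (Nat.le_self_pow (by norm_num) d)
      rw [Fr, Nat.div_eq_of_lt h4, Nat.div_eq_of_lt h6]
      norm_num
  rw [tsum_eq_sum hsupp]
  have h0 := card_min_eq hx
  have h1 : (Nat.card {w : ℤ × ℤ // condH x w ∧ mini w} : ℝ)
      = ((∑ d ∈ Finset.Icc 1 (Ax x + Bx x),
          μ d * ((((2 * (Ax x / d^4) + 1) * (2 * (Bx x / d^6) + 1) : ℕ) : ℤ) - 1) : ℤ) : ℝ) := by
    rw [← h0]
    push_cast
    ring
  rw [h1, card_box hx, Int.cast_sum, Finset.sum_div]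
  refine Finset.sum_congr rfl (fun d _ => ?_)
  rw [Fr]
  simp only [Int.cast_mul, Int.cast_sub, Int.cast_one, Int.cast_add, Int.cast_ofNat, Int.cast_natCast, Nat.cast_mul,
    Nat.cast_add, Nat.cast_ofNat, Nat.cast_one]
  try ring

lemma tendsto_Ax : Tendsto Ax atTop atTop := by
  have h1 : Tendsto (fun x : ℝ => x/4) atTop atTop :=
    Tendsto.atTop_div_const (by norm_num) tendsto_id
  have h2 : Tendsto (fun y : ℝ => y ^ ((3:ℝ)⁻¹)) atTop atTop :=
    tendsto_rpow_atTop (by norm_num)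
  exact tendsto_nat_floor_atTop.comp (h2.comp h1)

lemma tendsto_Bx : Tendsto Bx atTop atTop := by
  have h1 : Tendsto (fun x : ℝ => x/27) atTop atTop :=
    Tendsto.atTop_div_const (by norm_num) tendsto_id
  have h2 : Tendsto (fun y : ℝ => y ^ ((2:ℝ)⁻¹)) atTop atTop :=
    tendsto_rpow_atTop (by norm_num)
  exact tendsto_nat_floor_atTop.comp (h2.comp h1)

lemma L_lin (a b : ℝ) : Tendsto (fun t : ℝ => (a*t + b)/(2*t+1)) atTop (nhds (a/2)) := by
  have h0 : Tendsto (fun t : ℝ => t⁻¹) atTop (nhds 0) := tendsto_inv_atTop_zero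
  have hq : Tendsto (fun t : ℝ => (a + b * t⁻¹)/(2 + t⁻¹)) atTop (nhds ((a + b*0)/(2+0))) :=
    (tendsto_const_nhds.add (h0.const_mul b)).div (tendsto_const_nhds.add h0) (by norm_num)
  rw [show (a + b*0)/(2+0) = a/2 by norm_num] at hq
  refine Tendsto.congr' ?_ hq
  filter_upwards [eventually_gt_atTop 0] with t ht
  have hrec : 0 < t⁻¹ := inv_pos.mpr ht
  have h1 : (0:ℝ) < 2 + t⁻¹ := by linarith
  have h2 : (0:ℝ) < 2*t+1 := by linarith
  rw [div_eq_div_iff h1.ne' h2.ne']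
  field_simp

lemma L1 (k : ℕ) (hk : 0 < k) :
    Tendsto (fun n : ℕ => (2*((n/k : ℕ):ℝ)+1)/(2*(n:ℝ)+1)) atTop (nhds ((k:ℝ)⁻¹)) := by
  have hk' : (0:ℝ) < (k:ℝ) := by exact_mod_cast hk
  have hlo : Tendsto (fun n : ℕ => ((2/(k:ℝ))*(n:ℝ) + (-1))/(2*(n:ℝ)+1)) atTop
      (nhds ((2/(k:ℝ))/2)) := (L_lin (2/(k:ℝ)) (-1)).comp tendsto_natCast_atTop_atTop
  have hhi : Tendsto (fun n : ℕ => ((2/(k:ℝ))*(n:ℝ) + 3)/(2*(n:ℝ)+1)) atTop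
      (nhds ((2/(k:ℝ))/2)) := (L_lin (2/(k:ℝ)) 3).comp tendsto_natCast_atTop_atTop
  rw [show (2/(k:ℝ))/2 = (k:ℝ)⁻¹ by field_simp] at hlo hhi
  refine tendsto_of_tendsto_of_tendsto_of_le_of_le hlo hhi (fun n => ?_) (fun n => ?_)
  · -- lower bound
    have hden : (0:ℝ) < 2*(n:ℝ)+1 := by positivity
    have hmod : n < k * (n / k) + k := by
      have h1 := Nat.div_add_mod n k
      have h2 := Nat.mod_lt n hk
      omega
    have hcast : (n:ℝ) < (k:ℝ) * ((n/k : ℕ):ℝ) + (k:ℝ) := by exact_mod_cast hmod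
    have hdiv : (n:ℝ)/(k:ℝ) < ((n/k : ℕ):ℝ) + 1 := by
      rw [div_lt_iff₀ hk']
      nlinarith
    have hrw : 2/(k:ℝ)*(n:ℝ) = 2*((n:ℝ)/(k:ℝ)) := by ring
    have hnum : (2/(k:ℝ))*(n:ℝ) + (-1) ≤ 2*((n/k : ℕ):ℝ)+1 := by nlinarith
    exact div_le_div_of_nonneg_right hnum hden.le
  · -- upper bound
    have hden : (0:ℝ) < 2*(n:ℝ)+1 := by positivity
    have hdiv : ((n/k : ℕ):ℝ) ≤ (n:ℝ)/(k:ℝ) := Nat.cast_div_le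
    have hrw : 2/(k:ℝ)*(n:ℝ) = 2*((n:ℝ)/(k:ℝ)) := by ring
    have hnum : 2*((n/k : ℕ):ℝ)+1 ≤ (2/(k:ℝ))*(n:ℝ) + 3 := by nlinarith
    exact div_le_div_of_nonneg_right hnum hden.le

lemma Fr_tendsto (d : ℕ) : Tendsto (fun x => Fr x d) atTop (nhds (g10 d)) := by
  rcases Nat.eq_zero_or_pos d with rfl | hd
  · have h0 : ∀ x : ℝ, Fr x 0 = 0 := fun x => by simp [Fr]
    have hg : g10 0 = 0 := by simp [g10]
    rw [hg]
    exact Tendsto.congr (fun x => (h0 x).symm) tendsto_const_nhds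
  · have hR1 : Tendsto (fun x => (2*((Ax x/d^4 : ℕ):ℝ)+1)/(2*((Ax x : ℕ):ℝ)+1)) atTop
        (nhds (((d^4 : ℕ):ℝ))⁻¹) := (L1 (d^4) (by positivity)).comp tendsto_Ax
    have hR2 : Tendsto (fun x => (2*((Bx x/d^6 : ℕ):ℝ)+1)/(2*((Bx x : ℕ):ℝ)+1)) atTop
        (nhds (((d^6 : ℕ):ℝ))⁻¹) := (L1 (d^6) (by positivity)).comp tendsto_Bx
    have hDen : Tendsto (fun x => (2*(Ax x:ℝ)+1)*(2*(Bx x:ℝ)+1)) atTop atTop := by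
      refine Tendsto.atTop_mul_atTop₀ ?_ ?_
      · exact tendsto_atTop_add_const_right _ 1
          (Tendsto.const_mul_atTop (by norm_num) (tendsto_natCast_atTop_atTop.comp tendsto_Ax))
      · exact tendsto_atTop_add_const_right _ 1
          (Tendsto.const_mul_atTop (by norm_num) (tendsto_natCast_atTop_atTop.comp tendsto_Bx))
    have hE : Tendsto (fun x => ((2*(Ax x:ℝ)+1)*(2*(Bx x:ℝ)+1))⁻¹) atTop (nhds 0) :=
      tendsto_inv_atTop_zero.comp hDen
    have hmain : Tendsto (fun x => (μ d : ℝ) *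
        ((2*((Ax x/d^4 : ℕ):ℝ)+1)/(2*(Ax x:ℝ)+1) * ((2*((Bx x/d^6 : ℕ):ℝ)+1)/(2*(Bx x:ℝ)+1))
          - ((2*(Ax x:ℝ)+1)*(2*(Bx x:ℝ)+1))⁻¹)) atTop
        (nhds ((μ d : ℝ) * (((d^4 : ℕ):ℝ)⁻¹ * ((d^6 : ℕ):ℝ)⁻¹ - 0))) :=
      tendsto_const_nhds.mul ((hR1.mul hR2).sub hE)
    have hval : (μ d : ℝ) * (((d^4 : ℕ):ℝ)⁻¹ * ((d^6 : ℕ):ℝ)⁻¹ - 0) = g10 d := by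
      show _ = (μ d : ℝ) * ((d:ℝ) ^ 10)⁻¹
      push_cast
      rw [sub_zero, ← mul_inv, ← pow_add]
    rw [hval] at hmain
    refine hmain.congr (fun x => ?_)
    have h1 : (2*(Ax x:ℝ)+1) ≠ 0 := by positivity
    have h2 : (2*(Bx x:ℝ)+1) ≠ 0 := by positivity
    rw [Fr]
    field_simp
    try ring

lemma Fr_bound {x : ℝ} (hA1 : 1 ≤ Ax x) (hB1 : 1 ≤ Bx x) (d : ℕ) :
    ‖Fr x d‖ ≤ 3 * ((d:ℝ)^4)⁻¹ := by
  rcases Nat.eq_zero_or_pos d with rfl | hd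
  · simp [Fr]
  have key : ((2*(Ax x/d^4)+1)*(2*(Bx x/d^6)+1) - 1) * d^4
      ≤ 3*((2*(Ax x)+1)*(2*(Bx x)+1)) := by
    set A := Ax x
    set B := Bx x
    set α := A / d^4 with hα
    set β := B / d^6 with hβ
    have e1 : (2*α+1)*(2*β+1) - 1 = 4*α*β+2*α+2*β := by
      have : (2*α+1)*(2*β+1) = 4*α*β+2*α+2*β+1 := by ring
      omega
    rw [e1]
    have f1 : α*d^4 ≤ A := Nat.div_mul_le_self A (d^4)
    have f2 : β*d^6 ≤ B := Nat.div_mul_le_self B (d^6)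
    have f3 : d^4 ≤ d^6 := Nat.pow_le_pow_right hd (by norm_num)
    have f4 : β ≤ B := Nat.div_le_self _ _
    have t1 : 4*α*β*d^4 ≤ 4*A*B := by
      calc 4*α*β*d^4 = 4*((α*d^4)*β) := by ring
      _ ≤ 4*(A*β) := by
          have := Nat.mul_le_mul_right β f1
          omega
      _ ≤ 4*(A*B) := by
          have := Nat.mul_le_mul_left A f4
          omega
      _ = 4*A*B := by ring
    have t2 : 2*α*d^4 ≤ 2*A*B := by
      have h1 : 2*(α*d^4) ≤ 2*A := Nat.mul_le_mul_left 2 f1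
      have h2 : 2*A ≤ 2*A*B := by nlinarith
      calc 2*α*d^4 = 2*(α*d^4) := by ring
      _ ≤ 2*A := h1
      _ ≤ 2*A*B := h2
    have t3 : 2*β*d^4 ≤ 2*A*B := by
      have h0 : 2*β*d^4 ≤ 2*β*d^6 := Nat.mul_le_mul_left _ f3
      have h1 : 2*(β*d^6) ≤ 2*B := Nat.mul_le_mul_left 2 f2
      have h2 : 2*B ≤ 2*A*B := by nlinarith
      calc 2*β*d^4 ≤ 2*β*d^6 := h0
      _ = 2*(β*d^6) := by ring
      _ ≤ 2*B := h1
      _ ≤ 2*A*B := h2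
    calc (4*α*β+2*α+2*β)*d^4 = 4*α*β*d^4 + 2*α*d^4 + 2*β*d^4 := by ring
    _ ≤ 4*A*B + 2*A*B + 2*A*B := by omega
    _ = 8*(A*B) := by ring
    _ ≤ 3*((2*A+1)*(2*B+1)) := by nlinarith
  have hd' : (0:ℝ) < (d:ℝ) := by exact_mod_cast hd
  have hd4 : (0:ℝ) < (d:ℝ)^4 := pow_pos hd' 4
  have hDen : (0:ℝ) < (2*(Ax x:ℝ)+1)*(2*(Bx x:ℝ)+1) := by positivity
  have hge : 1 ≤ (2*(Ax x/d^4)+1)*(2*(Bx x/d^6)+1) := Nat.one_le_iff_ne_zero.mpr (by positivity)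
  have hN : (0:ℝ) ≤ (2*((Ax x/d^4 : ℕ):ℝ)+1)*(2*((Bx x/d^6 : ℕ):ℝ)+1) - 1 := by
    have h := hge
    have h2 : ((1:ℕ):ℝ) ≤ (((2*(Ax x/d^4)+1)*(2*(Bx x/d^6)+1) : ℕ):ℝ) := by exact_mod_cast h
    push_cast at h2
    linarith
  have hμ : |(μ d : ℝ)| ≤ 1 := by
    rw [← Int.cast_abs]
    exact_mod_cast ArithmeticFunction.abs_moebius_le_one (n := d)
  have hfrac : ((2*((Ax x/d^4 : ℕ):ℝ)+1)*(2*((Bx x/d^6 : ℕ):ℝ)+1) - 1)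
      / ((2*(Ax x:ℝ)+1)*(2*(Bx x:ℝ)+1)) ≤ 3 / ((d:ℝ)^4) := by
    rw [div_le_div_iff₀ hDen hd4]
    have hcast : ((((2*(Ax x/d^4)+1)*(2*(Bx x/d^6)+1) - 1) * d^4 : ℕ) : ℝ)
        ≤ ((3*((2*(Ax x)+1)*(2*(Bx x)+1)) : ℕ) : ℝ) := by exact_mod_cast key
    push_cast [Nat.cast_sub hge] at hcast
    linarith
  calc ‖Fr x d‖ = |(μ d : ℝ)| * (((2*((Ax x/d^4 : ℕ):ℝ)+1)*(2*((Bx x/d^6 : ℕ):ℝ)+1) - 1)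
        / ((2*(Ax x:ℝ)+1)*(2*(Bx x:ℝ)+1))) := by
        rw [Real.norm_eq_abs, Fr, abs_div, abs_mul, abs_of_nonneg hN, abs_of_nonneg hDen.le,
          mul_div_assoc]
  _ ≤ 1 * (((2*((Ax x/d^4 : ℕ):ℝ)+1)*(2*((Bx x/d^6 : ℕ):ℝ)+1) - 1)
        / ((2*(Ax x:ℝ)+1)*(2*(Bx x:ℝ)+1))) :=
      mul_le_mul_of_nonneg_right hμ (div_nonneg hN hDen.le)
  _ = ((2*((Ax x/d^4 : ℕ):ℝ)+1)*(2*((Bx x/d^6 : ℕ):ℝ)+1) - 1)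
        / ((2*(Ax x:ℝ)+1)*(2*(Bx x:ℝ)+1)) := one_mul _
  _ ≤ 3 / ((d:ℝ)^4) := hfrac
  _ = 3 * ((d:ℝ)^4)⁻¹ := div_eq_mul_inv 3 _

lemma eventually_AB : ∀ᶠ x : ℝ in atTop, 1 ≤ Ax x ∧ 1 ≤ Bx x := by
  filter_upwards [eventually_ge_atTop (27:ℝ)] with x hx27
  have hx4 : (1:ℝ) ≤ x/4 := by linarith
  have hx27' : (1:ℝ) ≤ x/27 := by linarith
  constructor
  · refine Nat.le_floor ?_
    rw [Nat.cast_one]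
    calc (1:ℝ) = 1 ^ ((3:ℝ)⁻¹) := (Real.one_rpow _).symm
    _ ≤ (x/4) ^ ((3:ℝ)⁻¹) := Real.rpow_le_rpow (by norm_num) hx4 (by norm_num)
  · refine Nat.le_floor ?_
    rw [Nat.cast_one]
    calc (1:ℝ) = 1 ^ ((2:ℝ)⁻¹) := (Real.one_rpow _).symm
    _ ≤ (x/27) ^ ((2:ℝ)⁻¹) := Real.rpow_le_rpow (by norm_num) hx27' (by norm_num)

lemma main_part1 : Tendsto (fun x : ℝ =>
    (Nat.card {w : ℤ × ℤ // condH x w ∧ mini w} : ℝ)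
      / (Nat.card {w : ℤ × ℤ // condH x w} : ℝ))
    atTop (nhds (∑' d : ℕ, g10 d)) := by
  have htsum : Tendsto (fun x : ℝ => ∑' d : ℕ, Fr x d) atTop (nhds (∑' d : ℕ, g10 d)) := by
    refine tendsto_tsum_of_dominated_convergence
      (bound := fun d : ℕ => 3 * ((d:ℝ)^4)⁻¹) ?_ Fr_tendsto ?_
    · exact (Real.summable_nat_pow_inv.mpr (by norm_num)).mul_left 3
    · filter_upwards [eventually_AB] with x hx d
      exact Fr_bound hx.1 hx.2 d
  refine Tendsto.congr' ?_ htsum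
  filter_upwards [eventually_ge_atTop (0:ℝ)] with x hx
  exact (ratio_eq hx).symm

lemma hS_eq : ∑' n : ℕ, f10 n = ∑' n : ℕ, (1:ℝ)/((n:ℝ)+1)^10 := by
  rw [summable_f10.of_norm.tsum_eq_zero_add, show f10 0 = 0 from _root_.map_zero f10, zero_add]
  refine tsum_congr fun n => ?_
  show (((n+1 : ℕ):ℝ)^10)⁻¹ = (1:ℝ)/((n:ℝ)+1)^10
  push_cast
  rw [one_div]

lemma tsum_g10_eq : ∑' d : ℕ, g10 d = (∑' n : ℕ, (1:ℝ)/((n:ℝ)+1)^10)⁻¹ := by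
  rw [← hS_eq]
  exact eq_inv_of_mul_eq_one_left (by rw [mul_comm]; exact ST_eq_one)

/-- The density, with respect to the naive height `H(a,b) = max(4|a|³, 27b²)`, of
minimal pairs `(a,b) ∈ ℤ²` (no prime `ℓ` with `ℓ⁴ ∣ a` and `ℓ⁶ ∣ b`) is
`1/ζ(10) = ∏_ℓ (1 - ℓ^{-10})`. -/
theorem stmt8 :
    Tendsto
      (fun x : ℝ =>
        (Nat.card {w : ℤ × ℤ //
            ((max (4 * |w.1| ^ 3) (27 * w.2 ^ 2) : ℤ) : ℝ) ≤ x ∧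
            ∀ ℓ : ℕ, ℓ.Prime → ¬ ((ℓ : ℤ) ^ 4 ∣ w.1 ∧ (ℓ : ℤ) ^ 6 ∣ w.2)} : ℝ) /
        (Nat.card {w : ℤ × ℤ //
            ((max (4 * |w.1| ^ 3) (27 * w.2 ^ 2) : ℤ) : ℝ) ≤ x} : ℝ))
      atTop (nhds ((∑' n : ℕ, (1 : ℝ) / ((n : ℝ) + 1) ^ 10)⁻¹)) ∧
    (∑' n : ℕ, (1 : ℝ) / ((n : ℝ) + 1) ^ 10)⁻¹ =
      ∏' ℓ : {q : ℕ // q.Prime}, (1 - (((ℓ : ℕ) : ℝ) ^ 10)⁻¹) := by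
  constructor
  · have h := main_part1
    rw [tsum_g10_eq] at h
    exact h
  · rw [← hS_eq]
    have h1 : (∑' n, f10 n)⁻¹ = ∑' n, g10 n := inv_eq_of_mul_eq_one_right ST_eq_one
    rw [h1, ← hasProd_Q.tprod_eq]
    rfl
end
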